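/- Let G = (V, E) be a graph with an umbrella-free ordering σ, let P = (v₁, v₂, …, v_k) be a path of G, and let v_ℓ ∉ V(P) be a vertex with v_k <_σ v_ℓ <_σ v₁ and v_ℓ v_k ∉ E. Then there exist two consecutive vertices v_{i-1} and v_i in P (2 ≤ i ≤ k) such that v_{i-1} v_ℓ ∈ E and v_i <_σ v_ℓ. -/

import Mathlib

/-- The linear order on `V` is an umbrella-free ordering of `G`. -/
def UmbrellaFree {V : Type*} [LinearOrder V] (G : SimpleGraph V) : Prop :=
  ∀ x y z : V, x < y → y < z → G.Adj x z → G.Adj x y ∨ G.Adj y z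

/-- A (simple) path of `G`, as a list of distinct vertices with consecutive
vertices adjacent. -/
def IsPathList {V : Type*} (G : SimpleGraph V) (P : List V) : Prop :=
  P.Nodup ∧ P.Chain' G.Adj

/-- Lemma: if `P = (v₁,…,v_k)` is a path, `vℓ ∉ V(P)`, `v_k <_σ vℓ <_σ v₁` and
`vℓ v_k ∉ E`, then there are consecutive vertices `v_{i-1}, v_i` of `P` with
`v_{i-1} vℓ ∈ E` and `v_i <_σ vℓ`. -/
theorem exists_consecutive_straddle {V : Type*} [LinearOrder V] (G : SimpleGraph V)
    (hUF : UmbrellaFree G) (P : List V) (hP : IsPathList G P) (hne : P ≠ [])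
    (vl : V) (hnot : vl ∉ P)
    (h1 : P.getLast hne < vl) (h2 : vl < P.head hne)
    (h3 : ¬ G.Adj vl (P.getLast hne)) :
    ∃ i : ℕ, ∃ h : i + 1 < P.length,
      G.Adj (P.get ⟨i, by omega⟩) vl ∧ P.get ⟨i + 1, h⟩ < vl := by
  classical
  have hlen : 0 < P.length := List.length_pos_iff.mpr hne
  set pred : ℕ → Prop := fun j => vl < P.getD j vl with hpred
  have hlast : P.getLast hne = P.get ⟨P.length - 1, by omega⟩ := by
    rw [List.getLast_eq_getElem]; rfl
  have hhead : P.head hne = P.get ⟨0, by omega⟩ := by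
    cases P with
    | nil => exact absurd rfl hne
    | cons a l => rfl
  have hgetD : ∀ j (h : j < P.length), P.getD j vl = P.get ⟨j, h⟩ := fun j h => by
    simp [List.getD_eq_getElem?_getD, List.getElem?_eq_getElem h]
  set i := Nat.findGreatest pred (P.length - 1) with hi
  have h0 : pred 0 := by
    show vl < P.getD 0 vl
    rw [hgetD 0 hlen, ← hhead]; exact h2
  have hpi : pred i := Nat.findGreatest_spec (Nat.zero_le _) h0
  have hile : i ≤ P.length - 1 := Nat.findGreatest_le _
  have hiL : i < P.length := by omega
  have hvi : vl < P.get ⟨i, hiL⟩ := by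
    have h' : vl < P.getD i vl := hpi
    rwa [hgetD i hiL] at h'
  have hplast : ¬ pred (P.length - 1) := by
    show ¬ vl < P.getD (P.length - 1) vl
    rw [hgetD _ (by omega), ← hlast]
    exact not_lt.mpr h1.le
  have hine : i ≠ P.length - 1 := fun h => hplast (h ▸ hpi)
  have hi1 : i + 1 < P.length := by omega
  have smaller : ∀ j (hj : j < P.length), i < j → P.get ⟨j, hj⟩ < vl := by
    intro j hj hij
    have hnp : ¬ pred j := Nat.findGreatest_is_greatest hij (by omega)
    have hnp' : ¬ vl < P.getD j vl := hnp
    rw [hgetD j hj] at hnp'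
    rcases lt_or_eq_of_le (not_lt.mp hnp') with h | h
    · exact h
    · exact absurd (h ▸ List.get_mem P ⟨j, hj⟩) hnot
  have hvi1 : P.get ⟨i + 1, hi1⟩ < vl := smaller (i + 1) hi1 (by omega)
  have hadj : G.Adj (P.get ⟨i, hiL⟩) (P.get ⟨i + 1, hi1⟩) :=
    List.isChain_iff_getElem.mp hP.2 i (by omega)
  rcases hUF (P.get ⟨i + 1, hi1⟩) vl (P.get ⟨i, hiL⟩) hvi1 hvi hadj.symm with h | h
  · -- P[i+1] adj vl
    have hne2 : i + 1 ≠ P.length - 1 := by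
      intro he
      have hge : P.get ⟨i + 1, hi1⟩ = P.getLast hne := by
        rw [hlast]; exact congrArg P.get (Fin.ext he)
      rw [hge] at h
      exact h3 h.symm
    have hi2 : i + 1 + 1 < P.length := by omega
    exact ⟨i + 1, hi2, h, smaller (i + 2) hi2 (by omega)⟩
  · exact ⟨i, hi1, h.symm, hvi1⟩
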